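/- For every tree T on n ≥ 2 vertices, h(T) ≤ (n−1)·log(n−1) = h(S_n); that is, among all trees of order n, the star S_n maximizes h. -/

import Mathlib

open Finset

/-- `f x = x * log x` (note `Real.log 0 = 0`, so `f 0 = 0`). -/
noncomputable def f (x : ℝ) : ℝ := x * Real.log x

lemma chord_bound {n : ℕ} (hn : 3 ≤ n) (d : ℝ) (hd1 : 1 ≤ d) (hd2 : d ≤ (n:ℝ) - 1) :
    f d ≤ (d - 1) / ((n:ℝ) - 2) * (((n:ℝ) - 1) * Real.log ((n:ℝ) - 1)) := by
  have hn3 : (3:ℝ) ≤ (n:ℝ) := by exact_mod_cast hn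
  have hden : (0:ℝ) < (n:ℝ) - 2 := by linarith
  set s : ℝ := ((n:ℝ) - 1 - d) / ((n:ℝ) - 2) with hs
  set t : ℝ := (d - 1) / ((n:ℝ) - 2) with ht
  have hs0 : 0 ≤ s := div_nonneg (by linarith) (le_of_lt hden)
  have ht0 : 0 ≤ t := div_nonneg (by linarith) (le_of_lt hden)
  have hst : s + t = 1 := by
    rw [hs, ht, ← add_div]
    rw [show (↑n - 1 - d) + (d - 1) = (↑n:ℝ) - 2 by ring, div_self (ne_of_gt hden)]
  have key := Real.convexOn_mul_log.2 (Set.mem_Ici.2 (by norm_num : (0:ℝ) ≤ 1))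
    (Set.mem_Ici.2 (by linarith : (0:ℝ) ≤ (n:ℝ) - 1)) hs0 ht0 hst
  have hcomb : s • (1:ℝ) + t • ((n:ℝ) - 1) = d := by
    simp only [smul_eq_mul, hs, ht]
    field_simp
    ring
  rw [hcomb] at key
  simpa [f, smul_eq_mul] using key

theorem star_maximizes_h_trees {V : Type*} [Fintype V] (T : SimpleGraph V)
    [DecidableRel T.Adj] (n : ℕ) (hn : 2 ≤ n) (hcard : Fintype.card V = n)
    (htree : T.IsTree) :
    ∑ v, f (T.degree v) ≤ ((n : ℝ) - 1) * Real.log ((n : ℝ) - 1) := by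
  have hdegpos : ∀ v : V, 1 ≤ T.degree v := by
    intro v
    rw [Nat.one_le_iff_ne_zero, ← Nat.pos_iff_ne_zero, T.degree_pos_iff_exists_adj v]
    have : ∃ w : V, w ≠ v := by
      have : 1 < Fintype.card V := by omega
      exact Fintype.exists_ne_of_one_lt_card this v
    obtain ⟨w, hw⟩ := this
    obtain ⟨p⟩ := htree.isConnected.preconnected v w
    cases p with
    | nil => exact absurd rfl hw
    | cons h _ => exact ⟨_, h⟩
  have hdeglt : ∀ v : V, T.degree v ≤ n - 1 := by
    intro v
    have := T.degree_lt_card_verts v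
    omega
  have hsumdeg : ∑ v, T.degree v = 2 * (n - 1) := by
    have h1 := htree.card_edgeFinset
    rw [T.sum_degrees_eq_twice_card_edges]
    omega
  rcases eq_or_lt_of_le hn with h2 | h3
  · -- n = 2 : all degrees are 1
    have : ∀ v : V, T.degree v = 1 := fun v => le_antisymm (by have := hdeglt v; omega) (hdegpos v)
    rw [← h2]
    simp only [this, f, Nat.cast_one, Real.log_one, mul_zero, Finset.sum_const, smul_eq_mul]
    norm_num
  · have hn3 : 3 ≤ n := h3
    have hden : (0:ℝ) < (n:ℝ) - 2 := by
      have : (3:ℝ) ≤ (n:ℝ) := by exact_mod_cast hn3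
      linarith
    set C : ℝ := ((n:ℝ) - 1) * Real.log ((n:ℝ) - 1) with hC
    calc ∑ v, f (T.degree v)
        ≤ ∑ v, ((T.degree v : ℝ) - 1) / ((n:ℝ) - 2) * C := by
          apply Finset.sum_le_sum
          intro v _
          apply chord_bound hn3
          · exact_mod_cast hdegpos v
          · have h := hdeglt v
            have : (T.degree v : ℝ) ≤ ((n - 1 : ℕ) : ℝ) := by exact_mod_cast h
            have hn1 : ((n - 1 : ℕ) : ℝ) = (n:ℝ) - 1 := by
              have : (1:ℕ) ≤ n := by omega
              push_cast [this]; ring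
            linarith [hn1 ▸ this]
      _ = (∑ v, ((T.degree v : ℝ) - 1)) / ((n:ℝ) - 2) * C := by
          rw [Finset.sum_div, ← Finset.sum_mul]
      _ = C := by
          have hsum : ∑ v, ((T.degree v : ℝ) - 1) = (n:ℝ) - 2 := by
            rw [Finset.sum_sub_distrib]
            have h1 : ∑ v : V, (T.degree v : ℝ) = 2 * ((n:ℝ) - 1) := by
              have := hsumdeg
              have hc : ((∑ v, T.degree v : ℕ) : ℝ) = ((2 * (n-1) : ℕ) : ℝ) := by rw [this]
              push_cast at hc
              rw [hc]
              have : (1:ℕ) ≤ n := by omega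
              push_cast [Nat.cast_sub this]
              ring
            simp [h1, Finset.card_univ, hcard]
            ring
          rw [hsum, div_self (ne_of_gt hden), one_mul]
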